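/- Let F : ℝ → ℂ be differentiable, 2π-periodic, even (F(-k) = F(k) for all k), and nonvanishing (F(k) ≠ 0 for all k). Then the winding integral of F around the Brillouin zone vanishes: ∫_0^{2π} (deriv F k) / (F k) dk = 0. -/

import Mathlib

open MeasureTheory intervalIntegral Real

/-- The winding integral of a differentiable, `2π`-periodic, even, nonvanishing
function `F : ℝ → ℂ` around the Brillouin zone vanishes. -/
theorem winding_integral_eq_zero_of_even
    (F : ℝ → ℂ)
    (hdiff : Differentiable ℝ F)
    (hper : ∀ k : ℝ, F (k + 2 * Real.pi) = F k)
    (heven : ∀ k : ℝ, F (-k) = F k)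
    (hnz : ∀ k : ℝ, F k ≠ 0) :
    ∫ k in (0 : ℝ)..(2 * Real.pi), deriv F k / F k = 0 := by
  set g : ℝ → ℂ := fun k => deriv F k / F k with hg
  -- derivative is periodic
  have hFeq : (fun y => F (y + 2 * Real.pi)) = F := funext hper
  have hFneg : (fun x => F (-x)) = F := funext heven
  have hdper : ∀ k, deriv F (k + 2 * Real.pi) = deriv F k := by
    intro k
    have h := deriv_comp_add_const F (2 * Real.pi) (x := k)
    rw [hFeq] at h
    exact h.symm
  have hdodd : ∀ k, deriv F (-k) = -deriv F k := by
    intro k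
    have h := deriv_comp_neg F (x := k)
    rw [hFneg] at h
    rw [h]; ring
  have hgper : Function.Periodic g (2 * Real.pi) := by
    intro k; simp only [hg, hdper k, hper k]
  have hgodd : ∀ k, g (-k) = -g k := by
    intro k; simp only [hg, hdodd k, heven k, neg_div]
  by_cases hint : IntervalIntegrable g volume 0 (2 * Real.pi)
  · have hπ : (0 : ℝ) ≤ Real.pi := Real.pi_pos.le
    -- shift the integral to [-π, π]
    have hshift : (∫ k in (0:ℝ)..(2*Real.pi), g k)
        = ∫ k in (-Real.pi)..(Real.pi), g k := by
      have h := hgper.intervalIntegral_add_eq 0 (-Real.pi)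
      rw [zero_add] at h
      rw [h]
      norm_num
      ring_nf
    -- integrability on subintervals
    have h2 : IntervalIntegrable g volume 0 Real.pi := by
      apply hint.mono_set
      rw [Set.uIcc_of_le (by linarith), Set.uIcc_of_le (by linarith [Real.pi_pos])]
      exact Set.Icc_subset_Icc le_rfl (by linarith)
    have h1 : IntervalIntegrable g volume (-Real.pi) 0 := by
      have := ((IntervalIntegrable.iff_comp_neg (f := g) (a := 0) (b := Real.pi)).mp h2)
      simp only [neg_zero] at this
      have heq : (fun x => g (-x)) = fun x => -g x := funext hgodd
      rw [heq] at this
      have t2 : IntervalIntegrable g volume 0 (-Real.pi) := by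
        have := this.neg
        simpa [Pi.neg_def] using this
      exact t2.symm
    have hsplit : (∫ k in (-Real.pi)..Real.pi, g k)
        = (∫ k in (-Real.pi)..(0:ℝ), g k) + ∫ k in (0:ℝ)..Real.pi, g k :=
      (integral_add_adjacent_intervals h1 h2).symm
    have hneg : (∫ k in (-Real.pi)..(0:ℝ), g k) = -∫ k in (0:ℝ)..Real.pi, g k := by
      have h := intervalIntegral.integral_comp_neg (a := (0:ℝ)) (b := Real.pi) (f := g)
      simp only [neg_zero] at h
      calc (∫ k in (-Real.pi)..(0:ℝ), g k) = ∫ x in (0:ℝ)..Real.pi, g (-x) := h.symm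
        _ = ∫ x in (0:ℝ)..Real.pi, -g x := by simp_rw [hgodd]
        _ = -∫ x in (0:ℝ)..Real.pi, g x := intervalIntegral.integral_neg
    calc (∫ k in (0:ℝ)..(2*Real.pi), deriv F k / F k)
        = ∫ k in (-Real.pi)..Real.pi, g k := hshift
      _ = 0 := by rw [hsplit, hneg]; ring
  · exact intervalIntegral.integral_undef hint
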